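/- If G is a finite simple graph on n ≥ 2 vertices whose Laplacian matrix has a nonzero eigenvalue of multiplicity n − 1, then G is isomorphic to the complete graph Kₙ. -/

import Mathlib

open Polynomial BigOperators SimpleGraph Finset
open Matrix


lemma charpoly_diag {n : Type*} [Fintype n] [DecidableEq n] (d : n → ℝ) :
    (diagonal d).charpoly = ∏ i, (X - C (d i)) := by
  rw [Matrix.charpoly, charmatrix, RingHom.mapMatrix_apply]
  rw [Matrix.diagonal_map (by simp : C (0:ℝ) = 0)]
  rw [show (Matrix.scalar n (X : ℝ[X])) = diagonal (fun _ => (X:ℝ[X])) from rfl]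
  rw [Matrix.diagonal_sub, Matrix.det_diagonal]

lemma charpoly_conj' {n : Type*} [Fintype n] [DecidableEq n] (A U W : Matrix n n ℝ)
    (h1 : U * W = 1) (h2 : W * U = 1) : (W * A * U).charpoly = A.charpoly := by
  have hmap : ∀ (M N : Matrix n n ℝ), (M * N).map (C : ℝ →+* ℝ[X]) = M.map C * N.map C :=
    fun M N => Matrix.map_mul
  have key : charmatrix (W * A * U) = W.map C * charmatrix A * U.map C := by
    rw [charmatrix, charmatrix, RingHom.mapMatrix_apply, RingHom.mapMatrix_apply]
    rw [mul_sub, sub_mul]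
    congr 1
    · rw [show (Matrix.scalar n (X : ℝ[X])) = (X : ℝ[X]) • (1 : Matrix n n ℝ[X]) by
        simp [Matrix.scalar, smul_eq_diagonal_mul]]
      rw [Matrix.mul_smul, mul_one, Matrix.smul_mul, ← hmap, h2]
      simp
    · rw [← hmap, ← hmap]
  have hdet : (W.map (C : ℝ →+* ℝ[X])).det * (U.map C).det = 1 := by
    rw [← det_mul, ← hmap, h2]; simp
  rw [Matrix.charpoly, key, det_mul, det_mul]
  have h3 : (W.map (C : ℝ →+* ℝ[X])).det * (charmatrix A).det * (U.map C).det
      = (charmatrix A).det * ((W.map C).det * (U.map C).det) := by ring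
  rw [h3, hdet, mul_one, Matrix.charpoly]

/-- The number of spanning trees of a simple graph `G`: the number of subgraphs
(as simple graphs on the same vertex set) contained in `G` that are trees. -/
noncomputable def spanningTreeCount {V : Type*} [Fintype V] (G : SimpleGraph V) : ℕ :=
  Set.ncard {H : SimpleGraph V | H ≤ G ∧ H.IsTree}

/-- A graph whose Laplacian has a nonzero eigenvalue of algebraic multiplicity n-1
is complete. -/
theorem stmt_10 {V : Type*} [Fintype V] [DecidableEq V] (G : SimpleGraph V)
    [DecidableRel G.Adj] (n : ℕ) (hn : 2 ≤ n) (hcard : Fintype.card V = n)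
    (mu : ℝ) (hmu : mu ≠ 0)
    (hmult : (G.lapMatrix ℝ).charpoly.rootMultiplicity mu = n - 1) :
    Nonempty (G ≃g (⊤ : SimpleGraph (Fin n))) := by
  classical
  have hne : Nonempty V := by
    rw [← Fintype.card_pos_iff, hcard]; omega
  set L := G.lapMatrix ℝ with hL
  have hH : L.IsHermitian := by
    rw [Matrix.IsHermitian, Matrix.conjTranspose_eq_transpose_of_trivial]
    exact G.isSymm_lapMatrix (R := ℝ)
  set ev : V → ℝ := hH.eigenvalues with hev
  set U : Matrix V V ℝ := (hH.eigenvectorUnitary : Matrix V V ℝ) with hU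
  have hUW : U * star U = 1 := Matrix.mem_unitaryGroup_iff.mp hH.eigenvectorUnitary.2
  have hWU : star U * U = 1 := Matrix.mem_unitaryGroup_iff'.mp hH.eigenvectorUnitary.2
  have hdiagconj : star U * L * U = Matrix.diagonal ev := by
    have h := hH.conjStarAlgAut_star_eigenvectorUnitary
    rw [Unitary.conjStarAlgAut_apply, Unitary.coe_star, star_star] at h
    simp only [RCLike.ofReal_real_eq_id, Function.id_comp] at h
    convert h using 2
  -- characteristic polynomial
  have hchar : L.charpoly = ∏ i, (X - C (ev i)) := by
    rw [← charpoly_conj' L U (star U) hUW hWU, hdiagconj, charpoly_diag]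
  -- root multiplicity as a cardinality
  have hroots : L.charpoly.roots = univ.val.map ev := by
    rw [hchar]
    have h := roots_multiset_prod_X_sub_C (univ.val.map ev)
    rw [Multiset.map_map] at h
    rw [Finset.prod_eq_multiset_prod]
    exact h
  have hcount : (univ.filter (fun i => ev i = mu)).card = n - 1 := by
    have h := count_roots (a := mu) L.charpoly
    rw [hroots, Multiset.count_map, hmult] at h
    rw [← h, Finset.card, Finset.filter_val]
    exact congrArg Multiset.card (Multiset.filter_congr (fun a _ => eq_comm))
  -- determinant is zero
  have hdet : L.det = 0 := by
    rw [← Matrix.exists_mulVec_eq_zero_iff]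
    refine ⟨fun _ => 1, ?_, G.lapMatrix_mulVec_const_eq_zero⟩
    intro h0
    have := congrFun h0 hne.some
    simp at this
  have hprod : ∏ i, ev i = 0 := by
    have h := hH.det_eq_prod_eigenvalues
    rw [hdet] at h
    exact_mod_cast h.symm
  obtain ⟨i₀, -, hi₀⟩ := Finset.prod_eq_zero_iff.mp hprod
  -- the index i₀ is the unique index with eigenvalue ≠ mu
  have hcompl : (univ.filter (fun i => ¬ ev i = mu)).card = 1 := by
    have h := Finset.card_filter_add_card_filter_not
      (s := (univ : Finset V)) (p := fun i => ev i = mu)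
    rw [hcount, Finset.card_univ, hcard] at h
    omega
  have huniq : ∀ i : V, ev i ≠ mu → i = i₀ := by
    obtain ⟨a, ha⟩ := Finset.card_eq_one.mp hcompl
    intro i hi
    have h1 : i ∈ univ.filter (fun i => ¬ ev i = mu) := by simp [hi]
    have h2 : i₀ ∈ univ.filter (fun i => ¬ ev i = mu) := by
      simp only [Finset.mem_filter, Finset.mem_univ, true_and, hi₀]
      exact Ne.symm hmu
    rw [ha] at h1 h2
    simp at h1 h2
    rw [h1, h2]
  have hsq : ∀ i : V, ev i * ev i = mu * ev i := by
    intro i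
    by_cases h : ev i = mu
    · rw [h]
    · rw [huniq i h, hi₀, mul_zero, mul_zero]
  -- L * L = mu • L
  have hspec : L = U * diagonal ev * star U := by
    have h := hH.spectral_theorem
    rw [Unitary.conjStarAlgAut_apply] at h
    simp only [RCLike.ofReal_real_eq_id, Function.id_comp] at h
    convert h using 3
  have hDD : diagonal ev * diagonal ev = mu • diagonal ev := by
    ext i j
    rcases eq_or_ne i j with rfl | hij
    · simp [Matrix.diagonal_apply_eq, hsq i]
    · simp [Matrix.diagonal_apply_ne _ hij]
  have hL2 : L * L = mu • L := by
    conv_lhs => rw [hspec]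
    conv_rhs => rw [hspec]
    simp only [mul_assoc]
    rw [← mul_assoc (star U) U (diagonal ev * star U), hWU, one_mul,
      ← mul_assoc (diagonal ev) (diagonal ev) (star U), hDD]
    simp [Matrix.smul_mul, Matrix.mul_smul]
  -- entries of the Laplacian
  have hentry : ∀ i j : V, i ≠ j → L i j = if G.Adj i j then (-1 : ℝ) else 0 := by
    intro i j hij
    simp only [hL, lapMatrix, degMatrix, Matrix.sub_apply, Matrix.diagonal_apply_ne _ hij,
      adjMatrix_apply, zero_sub]
    split <;> norm_num
  -- no common neighbors between non-adjacent vertices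
  have hcommon : ∀ i j : V, i ≠ j → ¬ G.Adj i j → ∀ k : V, ¬ (G.Adj i k ∧ G.Adj k j) := by
    intro i j hij hnadj k ⟨hik, hkj⟩
    have hLij : L i j = 0 := by rw [hentry i j hij, if_neg hnadj]
    have hsum : ∑ l, L i l * L l j = 0 := by
      have h := congrFun (congrFun hL2 i) j
      rw [Matrix.mul_apply] at h
      rw [h]
      simp [Matrix.smul_apply, hLij]
    have hnonneg : ∀ l ∈ (univ : Finset V), 0 ≤ L i l * L l j := by
      intro l _
      rcases eq_or_ne l i with rfl | hli
      · rw [hLij]; simp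
      · rcases eq_or_ne l j with rfl | hlj
        · rw [hLij]; simp
        · rw [hentry i l (Ne.symm hli), hentry l j hlj]
          split <;> split <;> norm_num
    have hzero := (Finset.sum_eq_zero_iff_of_nonneg hnonneg).mp hsum k (Finset.mem_univ k)
    have hik' : i ≠ k := G.ne_of_adj hik
    have hkj' : k ≠ j := G.ne_of_adj hkj
    rw [hentry i k hik', hentry k j hkj', if_pos hik, if_pos hkj] at hzero
    norm_num at hzero
  -- rank and kernel dimension
  have hrank : L.rank = n - 1 := by
    rw [hH.rank_eq_card_non_zero_eigs, Fintype.card_subtype, ← hcount]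
    congr 1
    apply Finset.filter_congr
    intro i _
    show ev i ≠ 0 ↔ ev i = mu
    constructor
    · intro h
      by_contra hne'
      rw [huniq i hne', hi₀] at h
      exact h rfl
    · intro h
      rw [h]; exact hmu
  have hker : Module.finrank ℝ (LinearMap.ker (Matrix.toLin' L)) = 1 := by
    have hkereq : LinearMap.ker (Matrix.toLin' L) = LinearMap.ker L.mulVecLin := by
      rw [Matrix.toLin'_apply']
    have hrn := LinearMap.finrank_range_add_finrank_ker L.mulVecLin
    have hrange : Module.finrank ℝ (LinearMap.range L.mulVecLin) = n - 1 := hrank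
    have hdom : Module.finrank ℝ (V → ℝ) = n := by
      rw [Module.finrank_pi, hcard]
    rw [hrange, hdom] at hrn
    rw [hkereq]
    omega
  -- connectivity
  have hcomp : Fintype.card G.ConnectedComponent = 1 := by
    rw [G.card_connectedComponent_eq_finrank_ker_toLin'_lapMatrix]
    exact hker
  have hconn : G.Preconnected := by
    intro u v
    obtain ⟨x, hx⟩ := Fintype.card_eq_one_iff.mp hcomp
    have : G.connectedComponentMk u = G.connectedComponentMk v := by
      rw [hx (G.connectedComponentMk u), hx (G.connectedComponentMk v)]
    exact (SimpleGraph.ConnectedComponent.eq).mp this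
  -- adjacency transitivity along walks
  have aux : ∀ (a b : V), G.Walk a b → a = b ∨ G.Adj a b := by
    intro a b w
    induction w with
    | nil => exact Or.inl rfl
    | @cons u c b h p ih =>
      rcases ih with rfl | hcb
      · exact Or.inr h
      · rcases eq_or_ne u b with rfl | hub
        · exact Or.inl rfl
        · right
          by_contra hnadj
          exact hcommon u b hub hnadj c ⟨h, hcb⟩
  have key : ∀ i j : V, i ≠ j → G.Adj i j := by
    intro i j hij
    obtain ⟨w⟩ := hconn i j
    rcases aux i j w with rfl | h
    · exact absurd rfl hij
    · exact h
  have hGtop : G = ⊤ := by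
    ext i j
    simp only [top_adj]
    exact ⟨fun h => G.ne_of_adj h, key i j⟩
  rw [hGtop]
  exact ⟨Iso.completeGraph (Fintype.equivFinOfCardEq hcard)⟩
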